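/- Fix integers m ≥ 2, n ≥ 1 and a real number D with 0 < D < n(m−1)/m. Then the differential privacy loss of the mechanism Q_D equals ε_DP(Q_D) = log((m−1)(n−D)/D). -/

import Mathlib

open Finset Real

/-- for `0 < D < n(m-1)/m`, the differential privacy loss of `Q_D`
(the infimum of all `ε ≥ 0` such that `Q_D(y|x) ≤ e^ε Q_D(y|x')` for all `y` and all
neighboring `x, x'`) equals `log((m-1)(n-D)/D)`. -/
theorem stmt_1 (m n : ℕ) (hm : 2 ≤ m) (hn : 1 ≤ n)
    (D : ℝ) (hD0 : 0 < D) (hDn : D < (n : ℝ) * ((m : ℝ) - 1) / m)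
    (QD : (Fin n → Fin m) → (Fin n → Fin m) → ℝ)
    (hQD : ∀ x y, QD x y =
      (1 - D / n) ^ n * (((m : ℝ) - 1) * ((n : ℝ) - D) / D) ^ (-(hammingDist x y : ℤ))) :
    sInf {ε : ℝ | 0 ≤ ε ∧ ∀ x x' y : Fin n → Fin m,
        hammingDist x x' = 1 → QD x y ≤ Real.exp ε * QD x' y} =
      Real.log (((m : ℝ) - 1) * ((n : ℝ) - D) / D) := by
  set R : ℝ := ((m : ℝ) - 1) * ((n : ℝ) - D) / D with hRdef
  have hm1 : (1 : ℝ) ≤ (m : ℝ) - 1 := by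
    have : (2 : ℝ) ≤ (m : ℝ) := by exact_mod_cast hm
    linarith
  have hmpos : (0 : ℝ) < m := by positivity
  have hnpos : (0 : ℝ) < n := by exact_mod_cast hn
  have hDn' : D < (n : ℝ) := by
    have h1 : (n : ℝ) * ((m : ℝ) - 1) / m < n := by
      rw [div_lt_iff₀ hmpos]
      nlinarith
    linarith
  have hR1 : 1 < R := by
    rw [hRdef, lt_div_iff₀ hD0]
    have : D * (m : ℝ) < n * ((m : ℝ) - 1) := (lt_div_iff₀ hmpos).1 hDn
    nlinarith
  have hRpos : (0 : ℝ) < R := by linarith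
  have hC : (0 : ℝ) < (1 - D / n) ^ n := by
    have h : (0:ℝ) < 1 - D / n := by
      have : D / n < 1 := (div_lt_one hnpos).2 hDn'
      linarith
    positivity
  -- the set is Ici (log R)
  have hset : {ε : ℝ | 0 ≤ ε ∧ ∀ x x' y : Fin n → Fin m,
      hammingDist x x' = 1 → QD x y ≤ Real.exp ε * QD x' y} = Set.Ici (Real.log R) := by
    ext ε
    simp only [Set.mem_setOf_eq, Set.mem_Ici]
    constructor
    · rintro ⟨-, hε⟩
      -- build neighboring x, x'
      have hmlt : 1 < m := hm
      set i0 : Fin n := ⟨0, hn⟩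
      set x : Fin n → Fin m := fun _ => ⟨0, by omega⟩
      set x' : Fin n → Fin m := Function.update x i0 ⟨1, by omega⟩
      have hdist : hammingDist x x' = 1 := by
        rw [hammingDist]
        have : ({i | x i ≠ x' i} : Finset (Fin n)) = {i0} := by
          ext i
          simp only [Finset.mem_filter, Finset.mem_univ, true_and, Finset.mem_singleton]
          constructor
          · intro h
            by_contra hi
            exact h (by simp [x', Function.update_of_ne hi])
          · rintro rfl
            simp only [x', Function.update_self, x]
            intro h
            have h2 := congrArg Fin.val h
            simp at h2
        rw [this, Finset.card_singleton]
      have := hε x x' x hdist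
      rw [hQD, hQD, hammingDist_self, hammingDist_comm, hdist] at this
      have h0 : ((1 - D / n) ^ n : ℝ) * R ^ (-(0:ℕ) : ℤ) = (1 - D / n) ^ n := by
        norm_num
      rw [show (-(0:ℕ) : ℤ) = 0 by norm_num, zpow_zero, mul_one] at this
      have hR' : R ^ (-(1:ℕ) : ℤ) = R⁻¹ := by norm_num
      rw [hR'] at this
      -- (1-D/n)^n ≤ exp ε * ((1-D/n)^n * R⁻¹)
      have hRe : R ≤ Real.exp ε := by
        have h2 : (1 - D / n) ^ n * R ≤ Real.exp ε * ((1 - D / n) ^ n * R⁻¹) * R := by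
          exact mul_le_mul_of_nonneg_right this (le_of_lt hRpos)
        rw [mul_assoc, mul_assoc, inv_mul_cancel₀ (ne_of_gt hRpos), mul_one] at h2
        have h2' : (1 - D / n) ^ n * R ≤ (1 - D / n) ^ n * Real.exp ε := by linarith
        exact (mul_le_mul_iff_right₀ hC).mp h2'
      calc Real.log R ≤ Real.log (Real.exp ε) :=
            Real.log_le_log (by linarith) hRe
        _ = ε := Real.log_exp ε
    · intro hε
      have hε0 : 0 ≤ ε := le_trans (le_of_lt (Real.log_pos hR1)) hε
      refine ⟨hε0, fun x x' y hxx' => ?_⟩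
      rw [hQD, hQD]
      set a : ℕ := hammingDist x y
      set b : ℕ := hammingDist x' y
      have htri : b ≤ 1 + a := by
        calc b ≤ hammingDist x' x + hammingDist x y := hammingDist_triangle x' x y
          _ = 1 + a := by rw [hammingDist_comm x' x, hxx']
      have hzle : (-(a:ℤ)) ≤ 1 + (-(b:ℤ)) := by
        have : (b : ℤ) ≤ 1 + a := by exact_mod_cast htri
        omega
      have h1 : R ^ (-(a:ℤ)) ≤ R ^ (1 + (-(b:ℤ))) :=
        zpow_le_zpow_right₀ (le_of_lt hR1) hzle
      have h2 : R ^ (1 + (-(b:ℤ))) = R * R ^ (-(b:ℤ)) := by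
        rw [zpow_add₀ (ne_of_gt hRpos), zpow_one]
      have h3 : R ≤ Real.exp ε := by
        calc R = Real.exp (Real.log R) := (Real.exp_log hRpos).symm
          _ ≤ Real.exp ε := Real.exp_le_exp.2 hε
      have h4 : R ^ (-(a:ℤ)) ≤ Real.exp ε * R ^ (-(b:ℤ)) := by
        calc R ^ (-(a:ℤ)) ≤ R * R ^ (-(b:ℤ)) := by rw [← h2]; exact h1
          _ ≤ Real.exp ε * R ^ (-(b:ℤ)) := by
              apply mul_le_mul_of_nonneg_right h3 (le_of_lt (zpow_pos hRpos _))
      calc (1 - D / n) ^ n * R ^ (-(a:ℤ))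
          ≤ (1 - D / n) ^ n * (Real.exp ε * R ^ (-(b:ℤ))) :=
            mul_le_mul_of_nonneg_left h4 (le_of_lt hC)
        _ = Real.exp ε * ((1 - D / n) ^ n * R ^ (-(b:ℤ))) := by ring
  rw [hset, csInf_Ici]
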